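/- Let N, M, n be positive integers with M ≤ N and n ≤ N, and let X be a hypergeometric random variable HG(N, M, n) counting the number of marked elements in a uniformly random n-subset of an N-set with M marked elements. Then E[X] = M·n/N and for any a > 0, P(X < M·n/N − a) ≤ exp(−a²/(2·Mn/N)). -/

import Mathlib

open Finset Classical

section Aux

variable {α : Type*} [DecidableEq α]

lemma aux_pow_sum (w : ℝ) (A : Finset α) :
    ∑ T ∈ A.powerset, w ^ T.card = (1 + w) ^ A.card := by
  have h := Finset.prod_add (fun _ : α => w) (fun _ => (1 : ℝ)) A
  simp only [Finset.prod_const, Finset.prod_const_one, one_pow, mul_one] at h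
  rw [add_comm]
  exact h.symm

lemma aux_filter_disj [Fintype α] (n : ℕ) (T : Finset α) :
    (Finset.univ.powersetCard n).filter (fun s => Disjoint T s) =
      (Finset.univ \ T).powersetCard n := by
  ext s
  simp only [Finset.mem_filter, Finset.mem_powersetCard, Finset.subset_sdiff,
    Finset.subset_univ, true_and]
  exact ⟨fun h => ⟨h.2.symm, h.1⟩, fun h => ⟨h.2, h.1.symm⟩⟩

lemma aux_count_disj [Fintype α] (n : ℕ) (T : Finset α) :
    ((Finset.univ.powersetCard n).filter (fun s => Disjoint T s)).card =
      (Fintype.card α - T.card).choose n := by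
  rw [aux_filter_disj, Finset.card_powersetCard, Finset.card_sdiff_of_subset (Finset.subset_univ T),
    Finset.card_univ]

lemma aux_choose_step (N n m : ℕ) (hm : m ≤ N) :
    (m - 1).choose n * N ≤ m.choose n * (N - n) := by
  match m with
  | 0 =>
    cases n with
    | zero => simp
    | succ k => simp [Nat.choose_eq_zero_of_lt (Nat.succ_pos k)]
  | m' + 1 =>
    simp only [Nat.add_sub_cancel]
    rcases Nat.lt_or_ge m' n with h | h
    · simp [Nat.choose_eq_zero_of_lt h]
    · have key : m'.choose n * (m' + 1) = (m' + 1).choose n * (m' + 1 - n) :=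
        Nat.choose_mul_succ_eq m' n
      have h2 : (m' + 1 - n) * N ≤ (N - n) * (m' + 1) := by
        have hn1 : n ≤ m' + 1 := le_trans h (Nat.le_succ m')
        have hnN : n ≤ N := le_trans hn1 hm
        rw [Nat.sub_mul, Nat.sub_mul]
        have hmm : n * (m' + 1) ≤ n * N := Nat.mul_le_mul_left n hm
        rw [Nat.mul_comm N (m' + 1)]
        exact Nat.sub_le_sub_left hmm _
      have hpos : 0 < m' + 1 := Nat.succ_pos m'
      have : m'.choose n * N * (m' + 1) ≤ (m' + 1).choose n * (N - n) * (m' + 1) := by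
        calc m'.choose n * N * (m' + 1) = m'.choose n * (m' + 1) * N := by ring
          _ = (m' + 1).choose n * (m' + 1 - n) * N := by rw [key]
          _ = (m' + 1).choose n * ((m' + 1 - n) * N) := by ring
          _ ≤ (m' + 1).choose n * ((N - n) * (m' + 1)) := Nat.mul_le_mul_left _ h2
          _ = (m' + 1).choose n * (N - n) * (m' + 1) := by ring
      exact Nat.le_of_mul_le_mul_right this hpos

lemma aux_choose_geom (N n k : ℕ) :
    (N - k).choose n * N ^ k ≤ N.choose n * (N - n) ^ k := by
  induction k with
  | zero => simp
  | succ k ih =>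
    have h1 : (N - (k + 1)).choose n * N ≤ (N - k).choose n * (N - n) := by
      have := aux_choose_step N n (N - k) (Nat.sub_le _ _)
      rwa [Nat.sub_sub] at this
    calc (N - (k + 1)).choose n * N ^ (k + 1)
        = ((N - (k + 1)).choose n * N) * N ^ k := by ring
      _ ≤ ((N - k).choose n * (N - n)) * N ^ k := Nat.mul_le_mul_right _ h1
      _ = ((N - k).choose n * N ^ k) * (N - n) := by ring
      _ ≤ (N.choose n * (N - n) ^ k) * (N - n) := Nat.mul_le_mul_right _ ih
      _ = N.choose n * (N - n) ^ (k + 1) := by ring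

lemma aux_choose_real (N n k : ℕ) (hN : 0 < N) (hn : n ≤ N) :
    ((N - k).choose n : ℝ) ≤ (N.choose n : ℝ) * (((N : ℝ) - n) / N) ^ k := by
  have hNR : (0 : ℝ) < N := Nat.cast_pos.mpr hN
  have h := aux_choose_geom N n k
  have hcast : ((N - k).choose n : ℝ) * (N : ℝ) ^ k ≤ (N.choose n : ℝ) * ((N : ℝ) - n) ^ k := by
    have := (Nat.cast_le (α := ℝ)).mpr h
    push_cast at this
    rwa [Nat.cast_sub hn] at this
  have hpow : (0 : ℝ) < (N : ℝ) ^ k := pow_pos hNR k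
  rw [div_pow, ← mul_div_assoc, le_div_iff₀ hpow]
  exact hcast

lemma aux_mgf (N M n : ℕ) (hN : 0 < N) (hn : n ≤ N) (marked : Finset (Fin N))
    (hM : marked.card = M) (w : ℝ) (hw : 0 ≤ w) :
    ∑ s ∈ Finset.univ.powersetCard n, (1 + w) ^ (marked \ s).card ≤
      (N.choose n : ℝ) * (1 + w * (((N : ℝ) - n) / N)) ^ M := by
  have step1 : ∀ s : Finset (Fin N), (1 + w : ℝ) ^ (marked \ s).card
      = ∑ T ∈ marked.powerset, if Disjoint T s then w ^ T.card else 0 := by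
    intro s
    have hps : (marked \ s).powerset = marked.powerset.filter (fun T => Disjoint T s) := by
      ext T
      simp [Finset.subset_sdiff]
    rw [← aux_pow_sum w (marked \ s), hps, Finset.sum_filter]
  calc ∑ s ∈ Finset.univ.powersetCard n, (1 + w : ℝ) ^ (marked \ s).card
      = ∑ s ∈ Finset.univ.powersetCard n, ∑ T ∈ marked.powerset,
          if Disjoint T s then w ^ T.card else 0 :=
        Finset.sum_congr rfl fun s _ => step1 s
    _ = ∑ T ∈ marked.powerset, ∑ s ∈ Finset.univ.powersetCard n,
          if Disjoint T s then w ^ T.card else 0 := Finset.sum_comm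
    _ = ∑ T ∈ marked.powerset, ((N - T.card).choose n : ℝ) * w ^ T.card := by
        refine Finset.sum_congr rfl fun T _ => ?_
        rw [← Finset.sum_filter, Finset.sum_const, aux_count_disj]
        simp [nsmul_eq_mul]
    _ ≤ ∑ T ∈ marked.powerset, ((N.choose n : ℝ) * (((N : ℝ) - n) / N) ^ T.card) * w ^ T.card := by
        refine Finset.sum_le_sum fun T _ => ?_
        exact mul_le_mul_of_nonneg_right (aux_choose_real N n T.card hN hn) (pow_nonneg hw _)
    _ = (N.choose n : ℝ) * ∑ T ∈ marked.powerset, (w * (((N : ℝ) - n) / N)) ^ T.card := by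
        rw [Finset.mul_sum]
        refine Finset.sum_congr rfl fun T _ => ?_
        rw [mul_pow]
        ring
    _ = (N.choose n : ℝ) * (1 + w * (((N : ℝ) - n) / N)) ^ M := by
        rw [aux_pow_sum, hM]

lemma aux_log_lb (q : ℝ) (hq0 : 0 < q) (hq1 : q ≤ 1) : (q - 1 / q) / 2 ≤ Real.log q := by
  have hx : 0 ≤ -Real.log q := by
    have := Real.log_nonpos (le_of_lt hq0) hq1
    linarith
  have hs : -Real.log q ≤ Real.sinh (-Real.log q) := by
    rcases eq_or_lt_of_le hx with h | h
    · rw [← h]; simp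
    · exact le_of_lt (Real.self_lt_sinh_iff.mpr h)
  have e1 : Real.exp (-Real.log q) = q⁻¹ := by rw [Real.exp_neg, Real.exp_log hq0]
  have e2 : Real.exp (-(-Real.log q)) = q := by rw [neg_neg, Real.exp_log hq0]
  rw [Real.sinh_eq, e1, e2] at hs
  rw [one_div]
  linarith

end Aux

/-- a hypergeometric random variable `HG(N, M, n)` — the number of marked
elements in a uniformly random `n`-subset of an `N`-set with `M` marked elements — has
mean `M·n/N` and satisfies the Chernoff lower tail bound
`P(X < Mn/N − a) ≤ exp(−a²/(2·Mn/N))`. Formalized by counting over the uniform space of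
`n`-subsets. -/
theorem stmt16 (N M n : ℕ) (hM : 0 < M) (hMN : M ≤ N) (hn : 0 < n) (hnN : n ≤ N)
    (marked : Finset (Fin N)) (hmarked : marked.card = M)
    (a : ℝ) (ha : 0 < a) :
    ((∑ s : {s : Finset (Fin N) // s.card = n}, ((s.1 ∩ marked).card : ℝ)) /
        (Fintype.card {s : Finset (Fin N) // s.card = n} : ℝ)
      = (M : ℝ) * n / N) ∧
    (((Finset.univ.filter (fun s : {s : Finset (Fin N) // s.card = n} =>
          ((s.1 ∩ marked).card : ℝ) < (M : ℝ) * n / N - a)).card : ℝ) /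
        (Fintype.card {s : Finset (Fin N) // s.card = n} : ℝ)
      ≤ Real.exp (-(a^2) / (2 * ((M : ℝ) * n / N)))) := by
  have hN : 0 < N := lt_of_lt_of_le hM hMN
  have hNR : (0:ℝ) < N := Nat.cast_pos.mpr hN
  have hnR : (0:ℝ) < n := Nat.cast_pos.mpr hn
  have hMR : (0:ℝ) < M := Nat.cast_pos.mpr hM
  set μ : ℝ := (M:ℝ) * n / N with hμdef
  clear_value μ
  have hμ : 0 < μ := by rw [hμdef]; positivity
  have hmem : ∀ s : Finset (Fin N), s ∈ Finset.univ.powersetCard n ↔ s.card = n := fun s =>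
    Finset.mem_powersetCard_univ
  have hcard : (Fintype.card {s : Finset (Fin N) // s.card = n} : ℝ) = (N.choose n : ℝ) := by
    rw [Fintype.card_finset_len, Fintype.card_fin]
  have hC : (0:ℝ) < (N.choose n : ℝ) := Nat.cast_pos.mpr (Nat.choose_pos hnN)
  constructor
  · -- the mean
    have hsum : ∑ s : {s : Finset (Fin N) // s.card = n}, ((s.1 ∩ marked).card : ℝ)
        = ∑ s ∈ Finset.univ.powersetCard n, ((s ∩ marked).card : ℝ) :=
      (Finset.sum_subtype _ hmem (fun s => ((s ∩ marked).card : ℝ))).symm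
    have hterm : ∀ s : Finset (Fin N), ((s ∩ marked).card : ℝ)
        = ∑ x ∈ marked, if x ∈ s then (1:ℝ) else 0 := by
      intro s
      have h1 : (s ∩ marked).card = ∑ x ∈ marked, if x ∈ s then 1 else 0 := by
        rw [Finset.inter_comm, ← Finset.filter_mem_eq_inter, Finset.card_filter]
      rw [h1, Nat.cast_sum]
      exact Finset.sum_congr rfl fun x _ => by split <;> simp
    have hcount : ∀ x : Fin N, ∑ s ∈ Finset.univ.powersetCard n, (if x ∈ s then (1:ℝ) else 0)
        = (N.choose n : ℝ) - ((N-1).choose n : ℝ) := by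
      intro x
      rw [← Finset.sum_filter, Finset.sum_const, nsmul_eq_mul, mul_one]
      have hsplit := Finset.card_filter_add_card_filter_not
        (s := (Finset.univ.powersetCard n : Finset (Finset (Fin N)))) (p := fun s => x ∈ s)
      have hne : (Finset.univ.powersetCard n).filter (fun s : Finset (Fin N) => ¬ x ∈ s)
          = (Finset.univ.powersetCard n).filter
              (fun s => Disjoint ({x} : Finset (Fin N)) s) := by
        apply Finset.filter_congr
        intro s _
        simp [Finset.disjoint_singleton_left]
      have h2 : ((Finset.univ.powersetCard n).filter (fun s : Finset (Fin N) => ¬ x ∈ s)).card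
          = (N-1).choose n := by
        rw [hne, aux_count_disj]
        simp
      have h3 : ((Finset.univ.powersetCard n : Finset (Finset (Fin N)))).card = N.choose n := by
        rw [Finset.card_powersetCard, Finset.card_univ, Fintype.card_fin]
      have h4 : ((Finset.univ.powersetCard n).filter (fun s : Finset (Fin N) => x ∈ s)).card
          = N.choose n - (N-1).choose n := by omega
      rw [h4]
      have hle : (N-1).choose n ≤ N.choose n := Nat.choose_le_choose n (Nat.sub_le N 1)
      push_cast [Nat.cast_sub hle]
      ring
    have hnum : ∑ s ∈ Finset.univ.powersetCard n, ((s ∩ marked).card : ℝ)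
        = (M:ℝ) * ((N.choose n : ℝ) - ((N-1).choose n : ℝ)) := by
      calc ∑ s ∈ Finset.univ.powersetCard n, ((s ∩ marked).card : ℝ)
          = ∑ s ∈ Finset.univ.powersetCard n, ∑ x ∈ marked, (if x ∈ s then (1:ℝ) else 0) :=
            Finset.sum_congr rfl fun s _ => hterm s
        _ = ∑ x ∈ marked, ∑ s ∈ Finset.univ.powersetCard n, (if x ∈ s then (1:ℝ) else 0) :=
            Finset.sum_comm
        _ = ∑ _x ∈ marked, ((N.choose n : ℝ) - ((N-1).choose n : ℝ)) :=
            Finset.sum_congr rfl fun x _ => hcount x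
        _ = (M:ℝ) * ((N.choose n : ℝ) - ((N-1).choose n : ℝ)) := by
            rw [Finset.sum_const, hmarked, nsmul_eq_mul]
    have hPascal : N.choose n = (N-1).choose (n-1) + (N-1).choose n := by
      have e1 : N - 1 + 1 = N := by omega
      have e2 : n - 1 + 1 = n := by omega
      have h := Nat.choose_succ_succ' (N-1) (n-1)
      rwa [e1, e2] at h
    have hid : N * ((N-1).choose (n-1)) = N.choose n * n := by
      have h := Nat.add_one_mul_choose_eq (N-1) (n-1)
      have e1 : N - 1 + 1 = N := Nat.succ_pred_eq_of_pos hN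
      have e2 : n - 1 + 1 = n := Nat.succ_pred_eq_of_pos hn
      rwa [e1, e2] at h
    have hCC : (N.choose n : ℝ) - ((N-1).choose n : ℝ) = ((N-1).choose (n-1) : ℝ) := by
      rw [hPascal]
      push_cast
      ring
    rw [hμdef, hsum, hnum, hcard, hCC]
    rw [div_eq_div_iff hC.ne' hNR.ne']
    have hidR : (N:ℝ) * (((N-1).choose (n-1) : ℕ) : ℝ) = ((N.choose n : ℕ) : ℝ) * n := by
      exact_mod_cast congrArg (Nat.cast (R := ℝ)) hid
    linear_combination (M:ℝ) * hidR
  · -- the tail bound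
    by_cases hcase : μ - a ≤ 0
    · have hempty : Finset.univ.filter (fun s : {s : Finset (Fin N) // s.card = n} =>
          ((s.1 ∩ marked).card : ℝ) < μ - a) = ∅ := by
        apply Finset.filter_eq_empty_iff.mpr
        intro s _
        push_neg
        exact le_trans hcase (Nat.cast_nonneg _)
      rw [hempty]
      simp only [Finset.card_empty, Nat.cast_zero, zero_div]
      exact le_of_lt (Real.exp_pos _)
    · push_neg at hcase
      set q : ℝ := (μ - a)/μ with hqdef
      clear_value q
      have hq0 : 0 < q := hqdef ▸ div_pos hcase hμ
      have hq1 : q < 1 := by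
        rw [hqdef, div_lt_one hμ]
        linarith
      set w : ℝ := (1 - q)/q with hwdef
      clear_value w
      have hw : 0 ≤ w := hwdef ▸ div_nonneg (by linarith) hq0.le
      have h1w : 1 + w = q⁻¹ := by
        rw [hwdef]
        field_simp
        ring
      set B := Finset.univ.filter (fun s : {s : Finset (Fin N) // s.card = n} =>
          ((s.1 ∩ marked).card : ℝ) < μ - a) with hBdef
      have stepA : (B.card : ℝ) * q ^ (μ - a) ≤
          ∑ s : {s : Finset (Fin N) // s.card = n}, q ^ (((s.1 ∩ marked).card : ℕ) : ℝ) := by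
        have h1 : (B.card : ℝ) * q ^ (μ - a) = ∑ _s ∈ B, q ^ (μ - a) := by
          rw [Finset.sum_const, nsmul_eq_mul]
        rw [h1]
        refine le_trans (Finset.sum_le_sum fun s hs => ?_)
          (Finset.sum_le_sum_of_subset_of_nonneg (Finset.subset_univ B) fun s _ _ =>
            Real.rpow_nonneg hq0.le _)
        have hsB : ((s.1 ∩ marked).card : ℝ) ≤ μ - a := le_of_lt (Finset.mem_filter.mp hs).2
        exact Real.rpow_le_rpow_of_exponent_ge hq0 hq1.le hsB
      have stepB : ∑ s : {s : Finset (Fin N) // s.card = n}, q ^ (((s.1 ∩ marked).card : ℕ) : ℝ)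
          = ∑ s ∈ Finset.univ.powersetCard n, q ^ ((s ∩ marked).card) := by
        calc ∑ s : {s : Finset (Fin N) // s.card = n}, q ^ (((s.1 ∩ marked).card : ℕ) : ℝ)
            = ∑ s : {s : Finset (Fin N) // s.card = n}, q ^ ((s.1 ∩ marked).card) :=
              Finset.sum_congr rfl fun s _ => Real.rpow_natCast q _
          _ = ∑ s ∈ Finset.univ.powersetCard n, q ^ ((s ∩ marked).card) :=
              (Finset.sum_subtype _ hmem (fun s => q ^ ((s ∩ marked).card))).symm
      have stepC : ∑ s ∈ Finset.univ.powersetCard n, q ^ ((s ∩ marked).card)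
          ≤ (N.choose n : ℝ) * (1 - (1-q) * n / N) ^ M := by
        have hXY : ∀ s : Finset (Fin N),
            q ^ ((s ∩ marked).card) = q ^ M * (1 + w) ^ ((marked \ s).card) := by
          intro s
          have hc : (marked ∩ s).card + (marked \ s).card = M := by
            rw [Finset.card_inter_add_card_sdiff, hmarked]
          rw [Finset.inter_comm s marked, h1w, ← hc, pow_add, mul_assoc, ← mul_pow,
            mul_inv_cancel₀ hq0.ne', one_pow, mul_one]
        calc ∑ s ∈ Finset.univ.powersetCard n, q ^ ((s ∩ marked).card)
            = ∑ s ∈ Finset.univ.powersetCard n, q ^ M * (1 + w) ^ ((marked \ s).card) :=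
              Finset.sum_congr rfl fun s _ => hXY s
          _ = q ^ M * ∑ s ∈ Finset.univ.powersetCard n, (1 + w) ^ ((marked \ s).card) :=
              (Finset.mul_sum _ _ _).symm
          _ ≤ q ^ M * ((N.choose n : ℝ) * (1 + w * (((N:ℝ) - n) / N)) ^ M) :=
              mul_le_mul_of_nonneg_left (aux_mgf N M n hN hnN marked hmarked w hw)
                (pow_nonneg hq0.le M)
          _ = (N.choose n : ℝ) * (q * (1 + w * (((N:ℝ) - n) / N))) ^ M := by
              rw [mul_pow]
              ring
          _ = (N.choose n : ℝ) * (1 - (1-q) * n / N) ^ M := by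
              have hbase : q * (1 + w * (((N:ℝ) - n) / N)) = 1 - (1-q) * n / N := by
                rw [hwdef]
                field_simp
                ring
              rw [hbase]
      have hfrac : (n:ℝ)/N ≤ 1 := by
        rw [div_le_one hNR]
        exact_mod_cast hnN
      have hprod : (1-q) * ((n:ℝ)/N) ≤ 1 :=
        mul_le_one₀ (by linarith) (by positivity) hfrac
      have hbase0 : 0 ≤ 1 - (1-q) * n / N := by
        have : (1-q) * (n:ℝ) / N = (1-q) * ((n:ℝ)/N) := by ring
        linarith [this ▸ hprod]
      have hbaseexp : 1 - (1-q) * n / N ≤ Real.exp (-(1-q) * n / N) := by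
        have h := Real.add_one_le_exp (-(1-q) * (n:ℝ) / N)
        have h2 : (1 : ℝ) - (1-q) * (n:ℝ) / N = -(1-q) * (n:ℝ) / N + 1 := by ring
        rw [h2]
        exact h
      have stepD : (1 - (1-q) * n / N) ^ M ≤ Real.exp (-(1-q) * μ) := by
        calc (1 - (1-q) * n / N) ^ M ≤ (Real.exp (-(1-q) * n / N)) ^ M :=
              pow_le_pow_left₀ hbase0 hbaseexp M
          _ = Real.exp (M * (-(1-q) * n / N)) := (Real.exp_nat_mul _ M).symm
          _ = Real.exp (-(1-q) * μ) := by
              congr 1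
              rw [hμdef]
              ring
      have hcomb : (B.card : ℝ) * q ^ (μ - a) ≤ (N.choose n : ℝ) * Real.exp (-(1-q) * μ) := by
        refine le_trans stepA (le_trans (le_of_eq stepB) (le_trans stepC ?_))
        exact mul_le_mul_of_nonneg_left stepD hC.le
      have hrpos : 0 < q ^ (μ - a) := Real.rpow_pos_of_pos hq0 _
      rw [hcard]
      have final1 : (B.card : ℝ) / (N.choose n : ℝ) ≤ Real.exp (-(1-q) * μ) / q ^ (μ - a) := by
        rw [div_le_div_iff₀ hC hrpos]
        calc (B.card : ℝ) * q ^ (μ - a) ≤ (N.choose n : ℝ) * Real.exp (-(1-q) * μ) := hcomb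
          _ = Real.exp (-(1-q) * μ) * (N.choose n : ℝ) := mul_comm _ _
      have final2 : Real.exp (-(1-q) * μ) / q ^ (μ - a) ≤ Real.exp (-(a^2) / (2 * μ)) := by
        rw [Real.rpow_def_of_pos hq0, ← Real.exp_sub]
        apply Real.exp_le_exp.mpr
        have hlog := aux_log_lb q hq0 hq1.le
        have hμne : μ ≠ 0 := hμ.ne'
        have hμa : μ - a ≠ 0 := ne_of_gt hcase
        have hq1μ : (1-q) * μ = a := by
          rw [hqdef]
          field_simp
          ring
        have hmul : (q - 1/q)/2 * (μ - a) ≤ Real.log q * (μ - a) :=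
          mul_le_mul_of_nonneg_right hlog (le_of_lt hcase)
        have hkey2 : (q - 1/q)/2 * (μ - a) = -(a - a^2/(2*μ)) := by
          rw [hqdef]
          field_simp
          ring
        have e1 : -(1-q) * μ = -a := by
          rw [← hq1μ]
          ring
        have e2 := sub_le_sub_left hmul (-(1-q) * μ)
        have e3 : -(1-q) * μ - (q - 1/q)/2 * (μ - a) = -(a^2) / (2 * μ) := by
          rw [hkey2, e1]
          ring
        exact le_of_le_of_eq e2 e3
      exact le_trans final1 final2
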